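/- Let g : Ω → Ω be defined by g(x) = ∏_{j≥1} g₀(X_j), where (X_j) is the M-decomposition of x and g₀ is the segment bijection. If (X_j)_{j≥1} is the M-decomposition of x, then (g₀(X_j))_{j≥1} is the M'-decomposition of g(x). Consequently g is a bijection of Ω = {ωκ^∞ : ω ∈ Σ*} onto itself. -/

import Mathlib

/-- The word `τ γ^k`. -/
def tgWord {N : ℕ} (τ γ : Fin N) (k : ℕ) : List (Fin N) :=
  τ :: List.replicate k γ

/-- The word `κ α^k κ γ`. -/
def kakWord {N : ℕ} (κ α γ : Fin N) (k : ℕ) : List (Fin N) :=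
  κ :: (List.replicate k α ++ [κ, γ])

/-- `C_M = {τγ^k : k ≥ 2} ∪ {κα^kκγ : k ≥ 0}`. -/
def CM {N : ℕ} (τ κ α γ : Fin N) : Set (List (Fin N)) :=
  {w | ∃ k, 2 ≤ k ∧ w = tgWord τ γ k} ∪ {w | ∃ k, w = kakWord κ α γ k}

/-- `C_{M'} = {κα^kκγ : k ≥ 0} ∪ {κα^kκγγ : k ≥ 0} ∪ {τγγ}`. -/
def CM' {N : ℕ} (τ κ α γ : Fin N) : Set (List (Fin N)) :=
  {w | ∃ k, w = kakWord κ α γ k} ∪ {w | ∃ k, w = kakWord κ α γ k ++ [γ]} ∪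
    {tgWord τ γ 2}

/-- The finite word `w` is a prefix of the infinite sequence `y`. -/
def PrefOf {N : ℕ} (w : List (Fin N)) (y : ℕ → Fin N) : Prop :=
  ∀ i, ∀ h : i < w.length, w.get ⟨i, h⟩ = y i

/-- The sequence `x` belongs to `Ω = {ω κ^∞ : ω ∈ Σ^*}`: it is eventually
equal to `κ`. -/
def InOmega {N : ℕ} (κ : Fin N) (x : ℕ → Fin N) : Prop :=
  ∃ n, ∀ i, n ≤ i → x i = κ

/-- `X` is the greedy decomposition of the infinite sequence `x` into
segments from `C ∪ Σ`: `x = X₀X₁X₂⋯` where each `X j` is the longest prefix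
of the remaining tail belonging to `C ∪ Σ` (single letters count as words of
length 1). -/
def IsDecompOf {N : ℕ} (C : Set (List (Fin N))) (x : ℕ → Fin N)
    (X : ℕ → List (Fin N)) : Prop :=
  ∀ j,
    PrefOf (X j) (fun i => x ((∑ t ∈ Finset.range j, (X t).length) + i)) ∧
    (X j ∈ C ∨ (X j).length = 1) ∧
    ∀ W : List (Fin N), (W ∈ C ∨ W.length = 1) →
      PrefOf W (fun i => x ((∑ t ∈ Finset.range j, (X t).length) + i)) →
      W.length ≤ (X j).length
open Classical in
/-- The segment map `g₀ : C_M ∪ Σ → C_{M'} ∪ Σ`: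
`τγ^k ↦ κα^{k-2}κγ` (`k ≥ 2`), `κα^kκγ ↦ κα^{k-1}κγγ` (`k ≥ 1`),
`κκγ ↦ τγγ`, and `i ↦ i` for single letters. -/
noncomputable def g0 {N : ℕ} (τ κ α γ : Fin N) (w : List (Fin N)) :
    List (Fin N) :=
  if ∃ k, 2 ≤ k ∧ w = tgWord τ γ k then kakWord κ α γ (w.length - 3)
  else if ∃ k, 1 ≤ k ∧ w = kakWord κ α γ k then
    kakWord κ α γ (w.length - 4) ++ [γ]
  else if w = kakWord κ α γ 0 then tgWord τ γ 2
  else w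

/-- `u` is the concatenation of the (nonempty) words `X 0, X 1, X 2, ⋯`. -/
def ConcatEq {N : ℕ} (X : ℕ → List (Fin N)) (u : ℕ → Fin N) : Prop :=
  ∀ j, PrefOf (X j) (fun i => u ((∑ t ∈ Finset.range j, (X t).length) + i))

namespace S15
variable {N : ℕ} {τ κ α γ : Fin N} {y : ℕ → Fin N}


@[simp] lemma tg_len (k : ℕ) : (tgWord τ γ k).length = k + 1 := by
  simp [tgWord]

@[simp] lemma kak_len (k : ℕ) : (kakWord κ α γ k).length = k + 3 := by
  simp [kakWord]

lemma tg_get0 (k : ℕ) (h : 0 < (tgWord τ γ k).length) : (tgWord τ γ k)[0] = τ := rfl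

lemma tg_get_succ (k i : ℕ) (hi : i < k) (h : i + 1 < (tgWord τ γ k).length) :
    (tgWord τ γ k)[i+1] = γ := by
  simp [tgWord, List.getElem_cons_succ, List.getElem_replicate]

lemma kak_get0 (k : ℕ) (h : 0 < (kakWord κ α γ k).length) : (kakWord κ α γ k)[0] = κ := rfl

lemma kak_get_succ (k i : ℕ) (hi : i < k) (h : i + 1 < (kakWord κ α γ k).length) :
    (kakWord κ α γ k)[i+1] = α := by
  have : i < (List.replicate k α : List (Fin N)).length := by simpa using hi
  simp [kakWord, List.getElem_cons_succ, List.getElem_append_left this,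
    List.getElem_replicate]

lemma kak_get_k1 (k : ℕ) (h : k + 1 < (kakWord κ α γ k).length) :
    (kakWord κ α γ k)[k+1] = κ := by
  simp [kakWord, List.getElem_cons_succ, List.getElem_append_right (by simp : (List.replicate k α : List (Fin N)).length ≤ k)]

lemma kak_get_k2 (k : ℕ) (h : k + 2 < (kakWord κ α γ k).length) :
    (kakWord κ α γ k)[k+2] = γ := by
  simp [kakWord, List.getElem_cons_succ]



lemma prefOf_iff {w : List (Fin N)} :
    PrefOf w y ↔ ∀ i, ∀ h : i < w.length, w[i] = y i := Iff.rfl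

/-- `TGp y k` : `y` starts with `τ γ^k`. -/
def TGp (τ γ : Fin N) (y : ℕ → Fin N) (k : ℕ) : Prop :=
  y 0 = τ ∧ ∀ i, 1 ≤ i → i ≤ k → y i = γ

/-- `KKp y k` : `y` starts with `κ α^k κ γ`. -/
def KKp (κ α γ : Fin N) (y : ℕ → Fin N) (k : ℕ) : Prop :=
  y 0 = κ ∧ (∀ i, 1 ≤ i → i ≤ k → y i = α) ∧ y (k+1) = κ ∧ y (k+2) = γ

lemma prefOf_tg {k : ℕ} : PrefOf (tgWord τ γ k) y ↔ TGp τ γ y k := by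
  constructor
  · intro h
    refine ⟨(h 0 (by simp)).symm ▸ rfl, fun i h1 hk => ?_⟩
    · obtain ⟨j, rfl⟩ : ∃ j, i = j + 1 := ⟨i - 1, by omega⟩
      have := h (j + 1) (by simp; omega)
      simp only [List.get_eq_getElem] at this
      rw [← this]
      simp [tgWord, List.getElem_replicate]
  · rintro ⟨h0, hse⟩ i hi
    match i with
    | 0 => simpa [tgWord] using h0.symm
    | (i+1) =>
      simp only [tg_len] at hi
      simp [tgWord, List.getElem_replicate]
      exact (hse (i+1) (by omega) (by omega)).symm

lemma prefOf_kak {k : ℕ} : PrefOf (kakWord κ α γ k) y ↔ KKp κ α γ y k := by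
  constructor
  · intro h
    refine ⟨(h 0 (by simp)).symm ▸ rfl, fun i h1 hk => ?_, ?_, ?_⟩
    · obtain ⟨j, rfl⟩ : ∃ j, i = j + 1 := ⟨i - 1, by omega⟩
      have := h (j + 1) (by simp; omega)
      simp only [List.get_eq_getElem] at this
      rw [← this]
      exact kak_get_succ k j (by omega) (by simp; omega)
    · rw [← h (k+1) (by simp)]; exact kak_get_k1 k (by simp)
    · rw [← h (k+2) (by simp)]; exact kak_get_k2 k (by simp)
  · rintro ⟨h0, ha, hk1, hk2⟩ i hi
    simp only [kak_len] at hi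
    show (kakWord κ α γ k)[i] = y i
    match i with
    | 0 => exact h0.symm
    | (i+1) =>
      rcases Nat.lt_trichotomy i k with h' | rfl | h'
      · rw [kak_get_succ k i h' (by simp; omega)]
        exact (ha (i+1) (by omega) (by omega)).symm
      · rw [kak_get_k1 i (by simp)]; exact hk1.symm
      · have : i = k + 1 := by omega
        subst this
        rw [kak_get_k2 k (by simp)]; exact hk2.symm

lemma prefOf_append_one {w : List (Fin N)} {c : Fin N} :
    PrefOf (w ++ [c]) y ↔ PrefOf w y ∧ y w.length = c := by
  constructor
  · intro h
    constructor
    · intro i hi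
      have := h i (by simp; omega)
      simp only [List.get_eq_getElem] at this ⊢
      rwa [List.getElem_append_left hi] at this
    · have := h w.length (by simp)
      simp only [List.get_eq_getElem] at this
      rw [List.getElem_append_right (le_refl _)] at this
      simpa using this.symm
  · rintro ⟨h, hc⟩ i hi
    simp only [List.length_append, List.length_singleton] at hi
    rcases Nat.lt_or_ge i w.length with h' | h'
    · simp only [List.get_eq_getElem]
      rw [List.getElem_append_left h']
      have := h i h'
      simpa using this
    · have : i = w.length := by omega
      subst this
      simp only [List.get_eq_getElem]
      rw [List.getElem_append_right (le_refl _)]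
      simpa using hc.symm

lemma prefOf_singleton {c : Fin N} : PrefOf [c] y ↔ y 0 = c := by
  constructor
  · intro h; exact (h 0 (by simp)).symm
  · intro h i hi
    simp only [List.length_singleton] at hi
    interval_cases i
    simpa using h.symm

lemma prefOf_len_one {W : List (Fin N)} (hW : W.length = 1) (h : PrefOf W y) :
    W = [y 0] := by
  match W, hW with
  | [c], _ => rw [prefOf_singleton] at h; rw [h]

lemma prefOf_eq_of_len {w w' : List (Fin N)} (hw : PrefOf w y) (hw' : PrefOf w' y)
    (h : w.length = w'.length) : w = w' := by
  apply List.ext_getElem h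
  intro i hi hi'
  have a1 := hw i hi
  have a2 := hw' i hi'
  simp only [List.get_eq_getElem] at a1 a2
  rw [a1, a2]


/-! ### word disequalities -/

lemma tg_inj {k k' : ℕ} (h : tgWord τ γ k = tgWord τ γ k') : k = k' := by
  have := congrArg List.length h
  simpa using this

lemma kak_inj {k k' : ℕ} (h : kakWord κ α γ k = kakWord κ α γ k') : k = k' := by
  have := congrArg List.length h
  simpa using this

lemma kak_ne_tg (h1 : τ ≠ κ) (k k' : ℕ) : kakWord κ α γ k ≠ tgWord τ γ k' := by
  intro h
  rw [kakWord, tgWord] at h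
  simp only [List.cons.injEq] at h
  exact h1 h.1.symm

lemma kak_ne_kakg (h3 : κ ≠ α) (k k' : ℕ) :
    kakWord κ α γ k ≠ kakWord κ α γ k' ++ [γ] := by
  intro h
  have hl := congrArg List.length h
  simp at hl
  subst hl
  have h2 : (kakWord κ α γ (k'+1))[k'+1]'(by simp) =
      (kakWord κ α γ k' ++ [γ])[k'+1]'(by simp) := by
    congr 1
  rw [kak_get_succ (k'+1) k' (by omega) (by simp)] at h2
  rw [List.getElem_append_left (by simp : k' + 1 < (kakWord κ α γ k').length),
    kak_get_k1 k' (by simp)] at h2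
  exact h3 h2.symm

lemma tg_ne_kakg (h1 : τ ≠ κ) (k k' : ℕ) :
    tgWord τ γ k ≠ kakWord κ α γ k' ++ [γ] := by
  intro h
  rw [kakWord, tgWord, List.cons_append] at h
  simp only [List.cons.injEq] at h
  exact h1 h.1

/-! ### evaluation of `g0` and its inverse -/

section g0
variable (h1 : τ ≠ κ) (h3 : κ ≠ α)

lemma g0_tg {k : ℕ} (hk : 2 ≤ k) :
    g0 τ κ α γ (tgWord τ γ k) = kakWord κ α γ (k - 2) := by
  have e : k + 1 - 3 = k - 2 := by omega
  rw [g0, if_pos ⟨k, hk, rfl⟩, tg_len, e]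

include h1 in
lemma g0_kak_succ (k : ℕ) :
    g0 τ κ α γ (kakWord κ α γ (k + 1)) = kakWord κ α γ k ++ [γ] := by
  have c1 : ¬ ∃ k', 2 ≤ k' ∧ kakWord κ α γ (k+1) = tgWord τ γ k' := by
    rintro ⟨k', -, h⟩; exact kak_ne_tg h1 _ _ h
  have e : k + 1 + 3 - 4 = k := by omega
  rw [g0, if_neg c1, if_pos ⟨k+1, by omega, rfl⟩, kak_len, e]

include h1 in
lemma g0_kak0 : g0 τ κ α γ (kakWord κ α γ 0) = tgWord τ γ 2 := by
  have c1 : ¬ ∃ k', 2 ≤ k' ∧ kakWord κ α γ 0 = tgWord τ γ k' := by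
    rintro ⟨k', -, h⟩; exact kak_ne_tg h1 _ _ h
  have c2 : ¬ ∃ k, 1 ≤ k ∧ kakWord κ α γ 0 = kakWord κ α γ k := by
    rintro ⟨k, hk, h⟩; have := kak_inj h; omega
  rw [g0, if_neg c1, if_neg c2, if_pos rfl]

lemma g0_single (c : Fin N) : g0 τ κ α γ [c] = [c] := by
  have c1 : ¬ ∃ k', 2 ≤ k' ∧ [c] = tgWord τ γ k' := by
    rintro ⟨k', hk, h⟩
    have := congrArg List.length h; simp at this; omega
  have c2 : ¬ ∃ k, 1 ≤ k ∧ [c] = kakWord κ α γ k := by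
    rintro ⟨k, hk, h⟩
    have := congrArg List.length h; simp at this
  have c3 : [c] ≠ kakWord κ α γ 0 := by
    intro h; have := congrArg List.length h; simp at this
  rw [g0, if_neg c1, if_neg c2, if_neg c3]

end g0

open Classical in
/-- inverse of `g0`. -/
noncomputable def g0inv (τ κ α γ : Fin N) (w : List (Fin N)) : List (Fin N) :=
  if ∃ k, w = kakWord κ α γ k then tgWord τ γ (w.length - 1)
  else if ∃ k, w = kakWord κ α γ k ++ [γ] then kakWord κ α γ (w.length - 3)
  else if w = tgWord τ γ 2 then kakWord κ α γ 0
  else w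

section g0inv
variable (h1 : τ ≠ κ) (h3 : κ ≠ α)

lemma g0inv_kak (k : ℕ) :
    g0inv τ κ α γ (kakWord κ α γ k) = tgWord τ γ (k + 2) := by
  have e : k + 3 - 1 = k + 2 := by omega
  rw [g0inv, if_pos ⟨k, rfl⟩, kak_len, e]

include h3 in
lemma g0inv_kakg (k : ℕ) :
    g0inv τ κ α γ (kakWord κ α γ k ++ [γ]) = kakWord κ α γ (k + 1) := by
  have c1 : ¬ ∃ k', kakWord κ α γ k ++ [γ] = kakWord κ α γ k' := by
    rintro ⟨k', h⟩; exact kak_ne_kakg h3 k' k h.symm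
  rw [g0inv, if_neg c1, if_pos ⟨k, rfl⟩]
  simp

include h1 in
lemma g0inv_tg2 : g0inv τ κ α γ (tgWord τ γ 2) = kakWord κ α γ 0 := by
  have c1 : ¬ ∃ k', tgWord τ γ 2 = kakWord κ α γ k' := by
    rintro ⟨k', h⟩; exact kak_ne_tg h1 k' 2 h.symm
  have c2 : ¬ ∃ k', tgWord τ γ 2 = kakWord κ α γ k' ++ [γ] := by
    rintro ⟨k', h⟩; exact tg_ne_kakg h1 2 k' h
  rw [g0inv, if_neg c1, if_neg c2, if_pos rfl]

include h1 in
lemma g0inv_single (c : Fin N) : g0inv τ κ α γ [c] = [c] := by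
  have c1 : ¬ ∃ k', [c] = kakWord κ α γ k' := by
    rintro ⟨k', h⟩; have := congrArg List.length h; simp at this
  have c2 : ¬ ∃ k', [c] = kakWord κ α γ k' ++ [γ] := by
    rintro ⟨k', h⟩; have := congrArg List.length h; simp at this
  have c3 : [c] ≠ tgWord τ γ 2 := by
    intro h; have := congrArg List.length h; simp at this
  rw [g0inv, if_neg c1, if_neg c2, if_neg c3]

end g0inv

/-! ### greedy segments -/

def Greedy (C : Set (List (Fin N))) (y : ℕ → Fin N) (w : List (Fin N)) : Prop :=
  PrefOf w y ∧ (w ∈ C ∨ w.length = 1) ∧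
    ∀ W, (W ∈ C ∨ W.length = 1) → PrefOf W y → W.length ≤ w.length

lemma greedy_unique {C : Set (List (Fin N))} {w w' : List (Fin N)}
    (h : Greedy C y w) (h' : Greedy C y w') : w = w' := by
  obtain ⟨hp, hm, hmax⟩ := h
  obtain ⟨hp', hm', hmax'⟩ := h'
  exact prefOf_eq_of_len hp hp' (le_antisymm (hmax' w hm hp) (hmax w' hm' hp'))

lemma mem_CM {w : List (Fin N)} :
    w ∈ CM τ κ α γ ↔ (∃ k, 2 ≤ k ∧ w = tgWord τ γ k) ∨ ∃ k, w = kakWord κ α γ k :=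
  Iff.rfl

lemma mem_CM' {w : List (Fin N)} :
    w ∈ CM' τ κ α γ ↔
      (∃ k, w = kakWord κ α γ k) ∨ (∃ k, w = kakWord κ α γ k ++ [γ]) ∨
        w = tgWord τ γ 2 := by
  simp only [CM', Set.mem_union, Set.mem_setOf_eq, Set.mem_singleton_iff]
  tauto

lemma kk_unique (h3 : κ ≠ α) {k k' : ℕ} (h : KKp κ α γ y k) (h' : KKp κ α γ y k') :
    k = k' := by
  rcases lt_trichotomy k k' with hlt | he | hlt
  · exact absurd ((h'.2.1 (k+1) (by omega) (by omega)).symm.trans h.2.2.1) (Ne.symm h3)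
  · exact he
  · exact absurd ((h.2.1 (k'+1) (by omega) (by omega)).symm.trans h'.2.2.1) (Ne.symm h3)

lemma exists_run {c : Fin N} (hc : c ≠ κ) (hy : InOmega κ y) : ∃ m, y (m+1) ≠ c := by
  obtain ⟨n, hn⟩ := hy
  exact ⟨n, by rw [hn (n+1) (by omega)]; exact Ne.symm hc⟩

lemma run_spec {c : Fin N} (hr : ∃ m, y (m+1) ≠ c) :
    (∀ i, 1 ≤ i → i ≤ Nat.find hr → y i = c) ∧ y (Nat.find hr + 1) ≠ c := by
  refine ⟨fun i hi1 hik => ?_, Nat.find_spec hr⟩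
  have h := Nat.find_min hr (m := i - 1) (by omega)
  push_neg at h
  have e : i - 1 + 1 = i := by omega
  rwa [e] at h

lemma run_eq_of_kk (h3 : κ ≠ α) {k' : ℕ} (hr : ∃ m, y (m+1) ≠ α)
    (hk' : KKp κ α γ y k') : k' = Nat.find hr := by
  obtain ⟨hmin, hfk⟩ := run_spec hr
  rcases lt_trichotomy k' (Nat.find hr) with hlt | he | hlt
  · exact absurd ((hmin (k'+1) (by omega) (by omega)).symm.trans hk'.2.2.1) (Ne.symm h3)
  · exact he
  · exact absurd (hk'.2.1 (Nat.find hr + 1) (by omega) (by omega)) hfk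

/-- Existence of the greedy `C_M`-segment. -/
lemma greedyM_exists (h1 : τ ≠ κ) (h3 : κ ≠ α) (h4 : κ ≠ γ)
    (hy : InOmega κ y) : ∃ w, Greedy (CM τ κ α γ) y w := by
  by_cases ht : y 0 = τ ∧ y 1 = γ ∧ y 2 = γ
  · have hr : ∃ m, y (m+1) ≠ γ := exists_run (Ne.symm h4) hy
    obtain ⟨hmin, hfk⟩ := run_spec hr
    set k := Nat.find hr with hkdef
    have hk2 : 2 ≤ k := by
      by_contra hc
      interval_cases k
      · exact hfk ht.2.1
      · exact hfk ht.2.2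
    refine ⟨tgWord τ γ k, prefOf_tg.mpr ⟨ht.1, hmin⟩, Or.inl (Or.inl ⟨k, hk2, rfl⟩), ?_⟩
    rintro W (hW | hW) hpre
    · rcases hW with ⟨k', hk', rfl⟩ | ⟨k', rfl⟩
      · have htg := prefOf_tg.mp hpre
        have : k' ≤ k := by
          by_contra hc
          exact hfk (htg.2 (k+1) (by omega) (by omega))
        simp; omega
      · exact absurd ((prefOf_kak.mp hpre).1.symm.trans ht.1) (Ne.symm h1)
    · simp; omega
  · by_cases hκ : y 0 = κ
    · have hr : ∃ m, y (m+1) ≠ α := exists_run (Ne.symm h3) hy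
      obtain ⟨hmin, hfk⟩ := run_spec hr
      set k := Nat.find hr with hkdef
      by_cases hch : y (k+1) = κ ∧ y (k+2) = γ
      · refine ⟨kakWord κ α γ k, prefOf_kak.mpr ⟨hκ, hmin, hch.1, hch.2⟩,
          Or.inl (Or.inr ⟨k, rfl⟩), ?_⟩
        rintro W (hW | hW) hpre
        · rcases hW with ⟨k', hk', rfl⟩ | ⟨k', rfl⟩
          · exact absurd ((prefOf_tg.mp hpre).1.symm.trans hκ) h1
          · have := run_eq_of_kk h3 hr (prefOf_kak.mp hpre)
            simp [← hkdef, this]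
        · simp; omega
      · refine ⟨[y 0], prefOf_singleton.mpr rfl, Or.inr rfl, ?_⟩
        rintro W (hW | hW) hpre
        · rcases hW with ⟨k', hk', rfl⟩ | ⟨k', rfl⟩
          · exact absurd ((prefOf_tg.mp hpre).1.symm.trans hκ) h1
          · have hkk := prefOf_kak.mp hpre
            have := run_eq_of_kk h3 hr hkk
            rw [← hkdef] at this
            subst this
            exact absurd ⟨hkk.2.2.1, hkk.2.2.2⟩ hch
        · simp; omega
    · refine ⟨[y 0], prefOf_singleton.mpr rfl, Or.inr rfl, ?_⟩
      rintro W (hW | hW) hpre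
      · rcases hW with ⟨k', hk', rfl⟩ | ⟨k', rfl⟩
        · have htg := prefOf_tg.mp hpre
          exact absurd ⟨htg.1, htg.2 1 (by omega) (by omega),
            htg.2 2 (by omega) (by omega)⟩ ht
        · exact absurd (prefOf_kak.mp hpre).1 hκ
      · simp; omega

/-- Existence of the greedy `C_{M'}`-segment. -/
lemma greedyM'_exists (h1 : τ ≠ κ) (h3 : κ ≠ α) (hy : InOmega κ y) :
    ∃ w, Greedy (CM' τ κ α γ) y w := by
  by_cases hκ : y 0 = κ
  · have hr : ∃ m, y (m+1) ≠ α := exists_run (Ne.symm h3) hy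
    obtain ⟨hmin, hfk⟩ := run_spec hr
    set k := Nat.find hr with hkdef
    by_cases hch : y (k+1) = κ ∧ y (k+2) = γ
    · by_cases hg : y (k+3) = γ
      · refine ⟨kakWord κ α γ k ++ [γ],
          prefOf_append_one.mpr ⟨prefOf_kak.mpr ⟨hκ, hmin, hch.1, hch.2⟩, by simpa using hg⟩,
          Or.inl (mem_CM'.mpr (Or.inr (Or.inl ⟨k, rfl⟩))), ?_⟩
        rintro W (hW | hW) hpre
        · rcases mem_CM'.mp hW with ⟨k', rfl⟩ | ⟨k', rfl⟩ | rfl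
          · have := run_eq_of_kk h3 hr (prefOf_kak.mp hpre)
            rw [← hkdef] at this
            simp [this]
          · have := run_eq_of_kk h3 hr (prefOf_kak.mp (prefOf_append_one.mp hpre).1)
            rw [← hkdef] at this
            simp [this]
          · exact absurd ((prefOf_tg.mp hpre).1.symm.trans hκ) h1
        · simp; omega
      · refine ⟨kakWord κ α γ k, prefOf_kak.mpr ⟨hκ, hmin, hch.1, hch.2⟩,
          Or.inl (mem_CM'.mpr (Or.inl ⟨k, rfl⟩)), ?_⟩
        rintro W (hW | hW) hpre
        · rcases mem_CM'.mp hW with ⟨k', rfl⟩ | ⟨k', rfl⟩ | rfl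
          · have := run_eq_of_kk h3 hr (prefOf_kak.mp hpre)
            rw [← hkdef] at this
            simp [this]
          · obtain ⟨hkk, hlast⟩ := prefOf_append_one.mp hpre
            have := run_eq_of_kk h3 hr (prefOf_kak.mp hkk)
            rw [← hkdef] at this
            subst this
            simp at hlast
            exact absurd hlast hg
          · exact absurd ((prefOf_tg.mp hpre).1.symm.trans hκ) h1
        · simp; omega
    · refine ⟨[y 0], prefOf_singleton.mpr rfl, Or.inr rfl, ?_⟩
      rintro W (hW | hW) hpre
      · rcases mem_CM'.mp hW with ⟨k', rfl⟩ | ⟨k', rfl⟩ | rfl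
        · have hkk := prefOf_kak.mp hpre
          have := run_eq_of_kk h3 hr hkk
          rw [← hkdef] at this
          subst this
          exact absurd ⟨hkk.2.2.1, hkk.2.2.2⟩ hch
        · have hkk := prefOf_kak.mp (prefOf_append_one.mp hpre).1
          have := run_eq_of_kk h3 hr hkk
          rw [← hkdef] at this
          subst this
          exact absurd ⟨hkk.2.2.1, hkk.2.2.2⟩ hch
        · exact absurd ((prefOf_tg.mp hpre).1.symm.trans hκ) h1
      · simp; omega
  · by_cases ht : y 0 = τ ∧ y 1 = γ ∧ y 2 = γ
    · refine ⟨tgWord τ γ 2, prefOf_tg.mpr ⟨ht.1, fun i hi1 hi2 => ?_⟩,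
        Or.inl (mem_CM'.mpr (Or.inr (Or.inr rfl))), ?_⟩
      · interval_cases i
        · exact ht.2.1
        · exact ht.2.2
      · rintro W (hW | hW) hpre
        · rcases mem_CM'.mp hW with ⟨k', rfl⟩ | ⟨k', rfl⟩ | rfl
          · exact absurd (prefOf_kak.mp hpre).1 hκ
          · exact absurd (prefOf_kak.mp (prefOf_append_one.mp hpre).1).1 hκ
          · simp
        · simp; omega
    · refine ⟨[y 0], prefOf_singleton.mpr rfl, Or.inr rfl, ?_⟩
      rintro W (hW | hW) hpre
      · rcases mem_CM'.mp hW with ⟨k', rfl⟩ | ⟨k', rfl⟩ | rfl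
        · exact absurd (prefOf_kak.mp hpre).1 hκ
        · exact absurd (prefOf_kak.mp (prefOf_append_one.mp hpre).1).1 hκ
        · have htg := prefOf_tg.mp hpre
          exact absurd ⟨htg.1, htg.2 1 (by omega) (by omega),
            htg.2 2 (by omega) (by omega)⟩ ht
      · simp; omega

/-! ### decompositions and concatenations -/

def posOf (X : ℕ → List (Fin N)) (j : ℕ) : ℕ := ∑ t ∈ Finset.range j, (X t).length

def tl (x : ℕ → Fin N) (n : ℕ) : ℕ → Fin N := fun i => x (n + i)

lemma posOf_zero (X : ℕ → List (Fin N)) : posOf X 0 = 0 := rfl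

lemma posOf_succ (X : ℕ → List (Fin N)) (j : ℕ) :
    posOf X (j+1) = posOf X j + (X j).length := Finset.sum_range_succ _ _

lemma isDecompOf_iff {C : Set (List (Fin N))} {x : ℕ → Fin N} {X : ℕ → List (Fin N)} :
    IsDecompOf C x X ↔ ∀ j, Greedy C (tl x (posOf X j)) (X j) := Iff.rfl

lemma concatEq_iff {X : ℕ → List (Fin N)} {u : ℕ → Fin N} :
    ConcatEq X u ↔ ∀ j, PrefOf (X j) (tl u (posOf X j)) := Iff.rfl

lemma inOmega_tl {x : ℕ → Fin N} (hx : InOmega κ x) (n : ℕ) : InOmega κ (tl x n) := by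
  obtain ⟨m, hm⟩ := hx
  exact ⟨m, fun i hi => hm (n + i) (by omega)⟩

lemma greedy_len_pos {C : Set (List (Fin N))} {w : List (Fin N)}
    (h : Greedy C y w) : 1 ≤ w.length := by
  simpa using h.2.2 [y 0] (Or.inr rfl) (prefOf_singleton.mpr rfl)

lemma decomp_len_pos {C : Set (List (Fin N))} {x : ℕ → Fin N} {X : ℕ → List (Fin N)}
    (hX : IsDecompOf C x X) (j : ℕ) : 1 ≤ (X j).length :=
  greedy_len_pos (isDecompOf_iff.mp hX j)

lemma decomp_unique {C : Set (List (Fin N))} {x : ℕ → Fin N} {X X' : ℕ → List (Fin N)}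
    (hX : IsDecompOf C x X) (hX' : IsDecompOf C x X') : X = X' := by
  have key : ∀ j, X j = X' j := by
    intro j
    induction j using Nat.strong_induction_on with
    | _ j ih =>
      have hpos : posOf X j = posOf X' j :=
        Finset.sum_congr rfl fun t ht => by rw [ih t (Finset.mem_range.mp ht)]
      have h1 := isDecompOf_iff.mp hX j
      have h2 := isDecompOf_iff.mp hX' j
      rw [← hpos] at h2
      exact greedy_unique h1 h2
  funext j; exact key j

open Classical in
noncomputable def segF (C : Set (List (Fin N))) (y : ℕ → Fin N) : List (Fin N) :=
  if h : ∃ w, Greedy C y w then h.choose else [y 0]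

lemma segF_greedy {C : Set (List (Fin N))} (h : ∃ w, Greedy C y w) :
    Greedy C y (segF C y) := by
  rw [segF, dif_pos h]
  exact h.choose_spec

noncomputable def posR (C : Set (List (Fin N))) (x : ℕ → Fin N) : ℕ → ℕ
  | 0 => 0
  | (j+1) => posR C x j + (segF C (tl x (posR C x j))).length

noncomputable def decF (C : Set (List (Fin N))) (x : ℕ → Fin N) (j : ℕ) :
    List (Fin N) := segF C (tl x (posR C x j))

lemma posOf_decF (C : Set (List (Fin N))) (x : ℕ → Fin N) (j : ℕ) :
    posOf (decF C x) j = posR C x j := by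
  induction j with
  | zero => rfl
  | succ j ih => rw [posOf_succ, ih]; rfl

lemma decomp_exists {C : Set (List (Fin N))} {x : ℕ → Fin N}
    (hg : ∀ n, ∃ w, Greedy C (tl x n) w) : IsDecompOf C x (decF C x) := by
  rw [isDecompOf_iff]
  intro j
  rw [posOf_decF]
  exact segF_greedy (hg _)

lemma posOf_mono {X : ℕ → List (Fin N)} {i j : ℕ} (h : i ≤ j) :
    posOf X i ≤ posOf X j :=
  Finset.sum_le_sum_of_subset (Finset.range_subset_range.mpr h)

lemma posOf_ge {X : ℕ → List (Fin N)} (hlen : ∀ j, 1 ≤ (X j).length) (j : ℕ) :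
    j ≤ posOf X j := by
  induction j with
  | zero => simp [posOf_zero]
  | succ j ih => rw [posOf_succ]; have := hlen j; omega

def JX (X : ℕ → List (Fin N)) (n : ℕ) : ℕ :=
  Nat.findGreatest (fun j => posOf X j ≤ n) n

lemma JX_le (X : ℕ → List (Fin N)) (n : ℕ) : posOf X (JX X n) ≤ n :=
  Nat.findGreatest_spec (P := fun j => posOf X j ≤ n) (Nat.zero_le n)
    (by simp [posOf_zero])

lemma JX_lt {X : ℕ → List (Fin N)} (hlen : ∀ j, 1 ≤ (X j).length) (n : ℕ) :
    n < posOf X (JX X n + 1) := by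
  by_contra hc
  push_neg at hc
  rcases Nat.lt_or_ge n (JX X n + 1) with h | h
  · have := posOf_ge hlen (JX X n + 1)
    omega
  · exact Nat.findGreatest_is_greatest (Nat.lt_succ_self _) h hc

lemma cover_unique {X : ℕ → List (Fin N)} {n j j' : ℕ}
    (ha : posOf X j ≤ n) (hb : n < posOf X (j+1))
    (ha' : posOf X j' ≤ n) (hb' : n < posOf X (j'+1)) : j = j' := by
  rcases lt_trichotomy j j' with h | h | h
  · have := posOf_mono (X := X) (Nat.succ_le_of_lt h)
    simp only [Nat.succ_eq_add_one] at this
    omega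
  · exact h
  · have := posOf_mono (X := X) (Nat.succ_le_of_lt h)
    simp only [Nat.succ_eq_add_one] at this
    omega

lemma concat_get {X : ℕ → List (Fin N)} {u : ℕ → Fin N} (hc : ConcatEq X u)
    {j i : ℕ} (hi : i < (X j).length) : u (posOf X j + i) = (X j)[i] := by
  have := hc j i hi
  simp only [List.get_eq_getElem] at this
  exact this.symm

lemma concat_unique {X : ℕ → List (Fin N)} {u u' : ℕ → Fin N}
    (hlen : ∀ j, 1 ≤ (X j).length) (hc : ConcatEq X u) (hc' : ConcatEq X u') :
    u = u' := by
  funext n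
  have h1 := JX_le X n
  have h2 := JX_lt hlen n
  rw [posOf_succ] at h2
  have hi : n - posOf X (JX X n) < (X (JX X n)).length := by omega
  have e : posOf X (JX X n) + (n - posOf X (JX X n)) = n := by omega
  have a1 := concat_get hc hi
  have a2 := concat_get hc' hi
  rw [e] at a1 a2
  rw [a1, a2]

noncomputable def concatF (X : ℕ → List (Fin N)) (hlen : ∀ j, 1 ≤ (X j).length)
    (n : ℕ) : Fin N :=
  (X (JX X n))[n - posOf X (JX X n)]'(by
    have h1 := JX_le X n
    have h2 := JX_lt hlen n
    rw [posOf_succ] at h2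
    omega)

lemma concatF_spec (X : ℕ → List (Fin N)) (hlen : ∀ j, 1 ≤ (X j).length) :
    ConcatEq X (concatF X hlen) := by
  intro j i hi
  have hJ : JX X (posOf X j + i) = j := by
    refine cover_unique (JX_le X _) (JX_lt hlen _) (Nat.le_add_right _ _) ?_
    rw [posOf_succ]
    omega
  show (X j).get ⟨i, hi⟩ = concatF X hlen (posOf X j + i)
  simp only [concatF, hJ, Nat.add_sub_cancel_left, List.get_eq_getElem]

/-! ### domain case analysis and heads -/

lemma mdom_cases {w : List (Fin N)} (h : w ∈ CM τ κ α γ ∨ w.length = 1) :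
    (∃ k, 2 ≤ k ∧ w = tgWord τ γ k) ∨ (∃ k, w = kakWord κ α γ (k+1)) ∨
      w = kakWord κ α γ 0 ∨ ∃ c, w = [c] := by
  rcases h with h | h
  · rcases mem_CM.mp h with ⟨k, hk, rfl⟩ | ⟨k, rfl⟩
    · exact Or.inl ⟨k, hk, rfl⟩
    · rcases k with _ | k
      · exact Or.inr (Or.inr (Or.inl rfl))
      · exact Or.inr (Or.inl ⟨k, rfl⟩)
  · rcases List.length_eq_one_iff.mp h with ⟨c, rfl⟩
    exact Or.inr (Or.inr (Or.inr ⟨c, rfl⟩))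

lemma m'dom_cases {w : List (Fin N)} (h : w ∈ CM' τ κ α γ ∨ w.length = 1) :
    (∃ k, w = kakWord κ α γ k) ∨ (∃ k, w = kakWord κ α γ k ++ [γ]) ∨
      w = tgWord τ γ 2 ∨ ∃ c, w = [c] := by
  rcases h with h | h
  · rcases mem_CM'.mp h with ⟨k, rfl⟩ | ⟨k, rfl⟩ | rfl
    · exact Or.inl ⟨k, rfl⟩
    · exact Or.inr (Or.inl ⟨k, rfl⟩)
    · exact Or.inr (Or.inr (Or.inl rfl))
  · rcases List.length_eq_one_iff.mp h with ⟨c, rfl⟩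
    exact Or.inr (Or.inr (Or.inr ⟨c, rfl⟩))

section transfer
variable (h1 : τ ≠ κ) (h2 : τ ≠ γ) (h3 : κ ≠ α) (h4 : κ ≠ γ) (h5 : α ≠ γ)

include h1 h3 in
lemma g0_len {w : List (Fin N)} (h : w ∈ CM τ κ α γ ∨ w.length = 1) :
    (g0 τ κ α γ w).length = w.length := by
  rcases mdom_cases h with ⟨k, hk, rfl⟩ | ⟨k, rfl⟩ | rfl | ⟨c, rfl⟩
  · rw [g0_tg hk]; simp; omega
  · rw [g0_kak_succ h1]; simp
  · rw [g0_kak0 h1]; simp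
  · rw [g0_single]

include h1 h3 in
lemma g0inv_len {w : List (Fin N)} (h : w ∈ CM' τ κ α γ ∨ w.length = 1) :
    (g0inv τ κ α γ w).length = w.length := by
  rcases m'dom_cases h with ⟨k, rfl⟩ | ⟨k, rfl⟩ | rfl | ⟨c, rfl⟩
  · rw [g0inv_kak]; simp
  · rw [g0inv_kakg h3]; simp
  · rw [g0inv_tg2 h1]; simp
  · rw [g0inv_single h1]

include h1 h3 in
lemma g0inv_g0 {w : List (Fin N)} (h : w ∈ CM τ κ α γ ∨ w.length = 1) :
    g0inv τ κ α γ (g0 τ κ α γ w) = w := by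
  rcases mdom_cases h with ⟨k, hk, rfl⟩ | ⟨k, rfl⟩ | rfl | ⟨c, rfl⟩
  · rw [g0_tg hk, g0inv_kak]
    congr 1; omega
  · rw [g0_kak_succ h1, g0inv_kakg h3]
  · rw [g0_kak0 h1, g0inv_tg2 h1]
  · rw [g0_single, g0inv_single h1]

include h1 h3 in
lemma g0_g0inv {w : List (Fin N)} (h : w ∈ CM' τ κ α γ ∨ w.length = 1) :
    g0 τ κ α γ (g0inv τ κ α γ w) = w := by
  rcases m'dom_cases h with ⟨k, rfl⟩ | ⟨k, rfl⟩ | rfl | ⟨c, rfl⟩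
  · rw [g0inv_kak, g0_tg (by omega : 2 ≤ k + 2)]
    congr 1
  · rw [g0inv_kakg h3, g0_kak_succ h1]
  · rw [g0inv_tg2 h1, g0_kak0 h1]
  · rw [g0inv_single h1, g0_single]

include h1 h3 in
lemma g0_mem {w : List (Fin N)} (h : w ∈ CM τ κ α γ ∨ w.length = 1) :
    g0 τ κ α γ w ∈ CM' τ κ α γ ∨ (g0 τ κ α γ w).length = 1 := by
  rcases mdom_cases h with ⟨k, hk, rfl⟩ | ⟨k, rfl⟩ | rfl | ⟨c, rfl⟩
  · rw [g0_tg hk]; exact Or.inl (mem_CM'.mpr (Or.inl ⟨k-2, rfl⟩))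
  · rw [g0_kak_succ h1]; exact Or.inl (mem_CM'.mpr (Or.inr (Or.inl ⟨k, rfl⟩)))
  · rw [g0_kak0 h1]; exact Or.inl (mem_CM'.mpr (Or.inr (Or.inr rfl)))
  · rw [g0_single]; exact Or.inr rfl

include h1 h3 in
lemma g0inv_mem {w : List (Fin N)} (h : w ∈ CM' τ κ α γ ∨ w.length = 1) :
    g0inv τ κ α γ w ∈ CM τ κ α γ ∨ (g0inv τ κ α γ w).length = 1 := by
  rcases m'dom_cases h with ⟨k, rfl⟩ | ⟨k, rfl⟩ | rfl | ⟨c, rfl⟩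
  · rw [g0inv_kak]; exact Or.inl (mem_CM.mpr (Or.inl ⟨k+2, by omega, rfl⟩))
  · rw [g0inv_kakg h3]; exact Or.inl (mem_CM.mpr (Or.inr ⟨k+1, rfl⟩))
  · rw [g0inv_tg2 h1]; exact Or.inl (mem_CM.mpr (Or.inr ⟨0, rfl⟩))
  · rw [g0inv_single h1]; exact Or.inr rfl

include h1 h2 h3 h4 in
lemma img_head_gamma {w : List (Fin N)} (h : w ∈ CM τ κ α γ ∨ w.length = 1)
    (hh : 0 < (g0 τ κ α γ w).length) (hγ : (g0 τ κ α γ w)[0] = γ) : w = [γ] := by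
  rcases mdom_cases h with ⟨k, hk, rfl⟩ | ⟨k, rfl⟩ | rfl | ⟨c, rfl⟩
  · simp only [g0_tg hk] at hγ
    exact absurd ((kak_get0 _ (by simp)).symm.trans hγ) h4
  · simp only [g0_kak_succ h1] at hγ
    rw [List.getElem_append_left (by simp)] at hγ
    exact absurd ((kak_get0 _ (by simp)).symm.trans hγ) h4
  · simp only [g0_kak0 h1] at hγ
    exact absurd ((tg_get0 _ (by simp)).symm.trans hγ) h2
  · simp only [g0_single] at hγ
    simp at hγ
    rw [hγ]

include h1 h3 h4 in
lemma img_head_alpha {w : List (Fin N)} (h : w ∈ CM τ κ α γ ∨ w.length = 1)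
    (hh : 0 < (g0 τ κ α γ w).length) (hα : (g0 τ κ α γ w)[0] = α) :
    w = [α] ∨ (w = kakWord κ α γ 0 ∧ τ = α) := by
  rcases mdom_cases h with ⟨k, hk, rfl⟩ | ⟨k, rfl⟩ | rfl | ⟨c, rfl⟩
  · simp only [g0_tg hk] at hα
    exact absurd ((kak_get0 _ (by simp)).symm.trans hα) h3
  · simp only [g0_kak_succ h1] at hα
    rw [List.getElem_append_left (by simp)] at hα
    exact absurd ((kak_get0 _ (by simp)).symm.trans hα) h3
  · simp only [g0_kak0 h1] at hα
    exact Or.inr ⟨rfl, ((tg_get0 _ (by simp)).symm.trans hα)⟩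
  · simp only [g0_single] at hα
    simp at hα
    rw [hα]
    exact Or.inl rfl

include h1 h3 in
lemma img_head_kappa {w : List (Fin N)} (h : w ∈ CM τ κ α γ ∨ w.length = 1)
    (hh : 0 < (g0 τ κ α γ w).length) (hκ : (g0 τ κ α γ w)[0] = κ) :
    w = [κ] ∨ (∃ k, 2 ≤ k ∧ w = tgWord τ γ k) ∨ ∃ k, w = kakWord κ α γ (k+1) := by
  rcases mdom_cases h with ⟨k, hk, rfl⟩ | ⟨k, rfl⟩ | rfl | ⟨c, rfl⟩
  · exact Or.inr (Or.inl ⟨k, hk, rfl⟩)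
  · exact Or.inr (Or.inr ⟨k, rfl⟩)
  · simp only [g0_kak0 h1] at hκ
    exact absurd ((tg_get0 _ (by simp)).symm.trans hκ) h1
  · simp only [g0_single] at hκ
    simp at hκ
    rw [hκ]
    exact Or.inl rfl

include h1 h4 h5 in
lemma img_snd_ne_gamma_tg {k : ℕ} (hk : 2 ≤ k)
    (hh : 1 < (g0 τ κ α γ (tgWord τ γ k)).length) :
    (g0 τ κ α γ (tgWord τ γ k))[1] ≠ γ := by
  intro hγ
  simp only [g0_tg hk] at hγ
  rcases Nat.eq_zero_or_pos (k - 2) with he | hp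
  · simp only [he] at hγ
    exact h4 ((kak_get_k1 0 (by simp)).symm.trans hγ)
  · exact h5 ((kak_get_succ (k-2) 0 (by omega) (by simp)).symm.trans hγ)

include h1 h4 h5 in
lemma img_snd_ne_gamma_kak {k : ℕ}
    (hh : 1 < (g0 τ κ α γ (kakWord κ α γ (k+1))).length) :
    (g0 τ κ α γ (kakWord κ α γ (k+1)))[1] ≠ γ := by
  intro hγ
  simp only [g0_kak_succ h1] at hγ
  rw [List.getElem_append_left (by simp : 1 < (kakWord κ α γ k).length)] at hγ
  rcases Nat.eq_zero_or_pos k with he | hp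
  · simp only [he] at hγ
    exact h4 ((kak_get_k1 0 (by simp)).symm.trans hγ)
  · exact h5 ((kak_get_succ k 0 (by omega) (by simp)).symm.trans hγ)

include h2 h4 in
lemma pre_head_gamma {w : List (Fin N)} (h : w ∈ CM' τ κ α γ ∨ w.length = 1)
    (hh : 0 < (g0inv τ κ α γ w).length) (hγ : (g0inv τ κ α γ w)[0] = γ)
    (h1 : τ ≠ κ) (h3 : κ ≠ α) : w = [γ] := by
  rcases m'dom_cases h with ⟨k, rfl⟩ | ⟨k, rfl⟩ | rfl | ⟨c, rfl⟩
  · simp only [g0inv_kak] at hγ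
    exact absurd ((tg_get0 _ (by simp)).symm.trans hγ) h2
  · simp only [g0inv_kakg h3] at hγ
    exact absurd ((kak_get0 _ (by simp)).symm.trans hγ) h4
  · simp only [g0inv_tg2 h1] at hγ
    exact absurd ((kak_get0 _ (by simp)).symm.trans hγ) h4
  · simp only [g0inv_single h1] at hγ
    simp at hγ
    rw [hγ]

include h3 h4 in
lemma pre_head_alpha {w : List (Fin N)} (h : w ∈ CM' τ κ α γ ∨ w.length = 1)
    (hh : 0 < (g0inv τ κ α γ w).length) (hα : (g0inv τ κ α γ w)[0] = α)
    (h1 : τ ≠ κ) : w = [α] ∨ ((∃ k, w = kakWord κ α γ k) ∧ τ = α) := by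
  rcases m'dom_cases h with ⟨k, rfl⟩ | ⟨k, rfl⟩ | rfl | ⟨c, rfl⟩
  · simp only [g0inv_kak] at hα
    exact Or.inr ⟨⟨k, rfl⟩, ((tg_get0 _ (by simp)).symm.trans hα)⟩
  · simp only [g0inv_kakg h3] at hα
    exact absurd ((kak_get0 _ (by simp)).symm.trans hα) h3
  · simp only [g0inv_tg2 h1] at hα
    exact absurd ((kak_get0 _ (by simp)).symm.trans hα) h3
  · simp only [g0inv_single h1] at hα
    simp at hα
    rw [hα]
    exact Or.inl rfl

include h1 h3 in
lemma pre_head_kappa {w : List (Fin N)} (h : w ∈ CM' τ κ α γ ∨ w.length = 1)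
    (hh : 0 < (g0inv τ κ α γ w).length) (hκ : (g0inv τ κ α γ w)[0] = κ) :
    w = [κ] ∨ (∃ k, w = kakWord κ α γ k ++ [γ]) ∨ w = tgWord τ γ 2 := by
  rcases m'dom_cases h with ⟨k, rfl⟩ | ⟨k, rfl⟩ | rfl | ⟨c, rfl⟩
  · simp only [g0inv_kak] at hκ
    exact absurd ((tg_get0 _ (by simp)).symm.trans hκ) h1
  · exact Or.inr (Or.inl ⟨k, rfl⟩)
  · exact Or.inr (Or.inr rfl)
  · simp only [g0inv_single h1] at hκ
    simp at hκ
    rw [hκ]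
    exact Or.inl rfl

include h1 h3 h4 h5 in
lemma pre_snd_ne_gamma_kakg {k : ℕ}
    (hh : 1 < (g0inv τ κ α γ (kakWord κ α γ k ++ [γ])).length) :
    (g0inv τ κ α γ (kakWord κ α γ k ++ [γ]))[1] ≠ γ := by
  intro hγ
  simp only [g0inv_kakg h3] at hγ
  exact h5 ((kak_get_succ (k+1) 0 (by omega) (by simp)).symm.trans hγ)

include h1 h3 h4 in
lemma pre_snd_ne_gamma_tg2
    (hh : 1 < (g0inv τ κ α γ (tgWord τ γ 2)).length) :
    (g0inv τ κ α γ (tgWord τ γ 2))[1] ≠ γ := by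
  intro hγ
  simp only [g0inv_tg2 h1] at hγ
  exact h4 ((kak_get_k1 0 (by simp)).symm.trans hγ)

end transfer

section transfer2
variable (h1 : τ ≠ κ) (h2 : τ ≠ γ) (h3 : κ ≠ α) (h4 : κ ≠ γ) (h5 : α ≠ γ)

include h1 h2 h3 h4 h5 in
lemma transfer_forward {x u : ℕ → Fin N} {X : ℕ → List (Fin N)}
    (hx : InOmega κ x) (hX : IsDecompOf (CM τ κ α γ) x X)
    (hu : ConcatEq (fun j => g0 τ κ α γ (X j)) u) :
    InOmega κ u ∧ IsDecompOf (CM' τ κ α γ) u (fun j => g0 τ κ α γ (X j)) := by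
  set Y : ℕ → List (Fin N) := fun j => g0 τ κ α γ (X j) with hYdef
  have hdom : ∀ j, X j ∈ CM τ κ α γ ∨ (X j).length = 1 := fun j => (hX j).2.1
  have hXlen : ∀ j, 1 ≤ (X j).length := decomp_len_pos hX
  have hYlen : ∀ j, (Y j).length = (X j).length := fun j => g0_len h1 h3 (hdom j)
  have hposY : ∀ j, posOf Y j = posOf X j := fun j =>
    Finset.sum_congr rfl fun t _ => hYlen t
  have hYlen1 : ∀ j, 1 ≤ (Y j).length := fun j => by rw [hYlen]; exact hXlen j
  have hug : ∀ j i, ∀ hi : i < (Y j).length, u (posOf X j + i) = (Y j)[i] := by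
    intro j i hi
    have h := concat_get hu (j := j) (i := i) hi
    rwa [hposY] at h
  have hgreedy : ∀ j, Greedy (CM τ κ α γ) (tl x (posOf X j)) (X j) :=
    isDecompOf_iff.mp hX
  have hxl : ∀ j, PrefOf (X j) (tl x (posOf X j)) := fun j => (hgreedy j).1
  have hheadnext : ∀ j', u (posOf X j') =
      (Y j')[0]'(by have := hYlen1 j'; omega) := by
    intro j'
    have h := hug j' 0 (by have := hYlen1 j'; omega)
    rwa [Nat.add_zero] at h
  obtain ⟨n₀, hn⟩ := hx
  -- a singleton segment is mapped to itself and the head-letter facts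
  have hΩu : InOmega κ u := by
    refine ⟨n₀, fun n hn' => ?_⟩
    have hc1 := JX_le Y n
    have hc2 := JX_lt hYlen1 n
    set j := JX Y n with hjdef
    rw [posOf_succ] at hc2
    rw [hposY] at hc1 hc2
    rw [hYlen] at hc2
    rcases mdom_cases (hdom j) with ⟨k, hk, he⟩ | ⟨k, he⟩ | he | ⟨c, he⟩
    · have htg := prefOf_tg.mp (he ▸ hxl j)
      have hγx : x (posOf X j + k) = γ := htg.2 k (by omega) (le_refl k)
      have hlt : posOf X j + k < n₀ := by
        by_contra hcon
        push_neg at hcon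
        exact h4 ((hn _ hcon).symm.trans hγx)
      have hle : (X j).length = k + 1 := by rw [he]; simp
      omega
    · have hkk := prefOf_kak.mp (he ▸ hxl j)
      have hγx : x (posOf X j + (k + 3)) = γ := hkk.2.2.2
      have hlt : posOf X j + (k + 3) < n₀ := by
        by_contra hcon
        push_neg at hcon
        exact h4 ((hn _ hcon).symm.trans hγx)
      have hle : (X j).length = k + 4 := by rw [he]; simp
      omega
    · have hkk := prefOf_kak.mp (he ▸ hxl j)
      have hγx : x (posOf X j + 2) = γ := hkk.2.2.2
      have hlt : posOf X j + 2 < n₀ := by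
        by_contra hcon
        push_neg at hcon
        exact h4 ((hn _ hcon).symm.trans hγx)
      have hle : (X j).length = 3 := by rw [he]; simp
      omega
    · have hle : (X j).length = 1 := by rw [he]; rfl
      have hnp : n = posOf X j := by omega
      have hYj : Y j = [c] := by
        show g0 τ κ α γ (X j) = [c]
        rw [he, g0_single]
      have h0 := hheadnext j
      rw [hnp, h0]
      have hcx : x (posOf X j + 0) = c := prefOf_singleton.mp (he ▸ hxl j)
      have hcκ : c = κ := by
        rw [← hcx]
        exact hn _ (by omega)
      simp only [hYj, List.getElem_singleton]
      exact hcκ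
  refine ⟨hΩu, ?_⟩
  rw [isDecompOf_iff]
  intro j
  rw [hposY j]
  have hpref : PrefOf (Y j) (tl u (posOf X j)) := by
    have h : PrefOf (Y j) (tl u (posOf Y j)) := hu j
    rwa [hposY j] at h
  refine ⟨hpref, g0_mem h1 h3 (hdom j), ?_⟩
  intro W hW hpre
  rcases mdom_cases (hdom j) with ⟨k, hk, he⟩ | ⟨k, he⟩ | he | ⟨c, he⟩
  · -- X j = τγ^k
    have hYj : Y j = kakWord κ α γ (k - 2) := by
      show g0 τ κ α γ (X j) = _
      rw [he, g0_tg hk]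
    have hKKz : KKp κ α γ (tl u (posOf X j)) (k - 2) := prefOf_kak.mp (hYj ▸ hpref)
    have hstep : posOf X (j + 1) = posOf X j + (k + 1) := by
      rw [posOf_succ, he]; simp
    have hnotγ : tl u (posOf X j) (k + 1) ≠ γ := by
      intro hzg
      have hhd := hheadnext (j + 1)
      rw [hstep] at hhd
      have hγhd : (Y (j+1))[0]'(by have := hYlen1 (j+1); omega) = γ := by
        rw [← hhd]; exact hzg
      have hX1 : X (j + 1) = [γ] := img_head_gamma h1 h2 h3 h4 (hdom (j+1)) _ hγhd
      have hxg : x (posOf X (j+1) + 0) = γ := prefOf_singleton.mp (hX1 ▸ hxl (j+1))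
      have htg := prefOf_tg.mp (he ▸ hxl j)
      have hTG' : TGp τ γ (tl x (posOf X j)) (k + 1) := by
        refine ⟨htg.1, fun i hi1 hi2 => ?_⟩
        rcases Nat.lt_or_ge i (k + 1) with hlt | hge
        · exact htg.2 i hi1 (by omega)
        · have : i = k + 1 := by omega
          subst this
          show x (posOf X j + (k + 1)) = γ
          rw [← hstep]
          exact hxg
      have hmax := (hgreedy j).2.2 (tgWord τ γ (k+1))
        (Or.inl (mem_CM.mpr (Or.inl ⟨k+1, by omega, rfl⟩))) (prefOf_tg.mpr hTG')
      rw [he] at hmax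
      simp at hmax
    rcases m'dom_cases hW with ⟨m, rfl⟩ | ⟨m, rfl⟩ | rfl | ⟨c', rfl⟩
    · have hm := kk_unique h3 (prefOf_kak.mp hpre) hKKz
      rw [hYj]
      simp
      omega
    · obtain ⟨hw1, hw2⟩ := prefOf_append_one.mp hpre
      have hm := kk_unique h3 (prefOf_kak.mp hw1) hKKz
      rw [kak_len, hm] at hw2
      have e : k - 2 + 3 = k + 1 := by omega
      rw [e] at hw2
      exact absurd hw2 hnotγ
    · exact absurd ((prefOf_tg.mp hpre).1.symm.trans hKKz.1) h1
    · rw [hYj]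
      simp
  · -- X j = κα^{k+1}κγ
    have hYj : Y j = kakWord κ α γ k ++ [γ] := by
      show g0 τ κ α γ (X j) = _
      rw [he, g0_kak_succ h1]
    obtain ⟨hw1, hw2⟩ := prefOf_append_one.mp (hYj ▸ hpref)
    have hKKz : KKp κ α γ (tl u (posOf X j)) k := prefOf_kak.mp hw1
    rcases m'dom_cases hW with ⟨m, rfl⟩ | ⟨m, rfl⟩ | rfl | ⟨c', rfl⟩
    · have hm := kk_unique h3 (prefOf_kak.mp hpre) hKKz
      rw [hYj]
      simp
      omega
    · have hm := kk_unique h3 (prefOf_kak.mp (prefOf_append_one.mp hpre).1) hKKz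
      rw [hYj]
      simp
      omega
    · exact absurd ((prefOf_tg.mp hpre).1.symm.trans hKKz.1) h1
    · rw [hYj]
      simp
  · -- X j = κκγ
    have hYj : Y j = tgWord τ γ 2 := by
      show g0 τ κ α γ (X j) = _
      rw [he, g0_kak0 h1]
    have htgz := prefOf_tg.mp (hYj ▸ hpref)
    rcases m'dom_cases hW with ⟨m, rfl⟩ | ⟨m, rfl⟩ | rfl | ⟨c', rfl⟩
    · exact absurd ((prefOf_kak.mp hpre).1.symm.trans htgz.1) (Ne.symm h1)
    · exact absurd ((prefOf_kak.mp (prefOf_append_one.mp hpre).1).1.symm.trans htgz.1)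
        (Ne.symm h1)
    · rw [hYj]
    · rw [hYj]
      simp
  · -- X j = [c]
    have hYj : Y j = [c] := by
      show g0 τ κ α γ (X j) = [c]
      rw [he, g0_single]
    have hle : (X j).length = 1 := by rw [he]; rfl
    have hzc : u (posOf X j) = c := by
      have := hheadnext j
      rw [this]
      simp [hYj]
    have hxc : x (posOf X j + 0) = c := prefOf_singleton.mp (he ▸ hxl j)
    -- the κ-pattern cannot appear in u after a singleton segment
    have hkapcon : ∀ m, KKp κ α γ (tl u (posOf X j)) m → False := by
      intro m hKK
      have hcκ : c = κ := by
        have h0 : tl u (posOf X j) 0 = c := by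
          show u (posOf X j + 0) = c
          rw [Nat.add_zero]; exact hzc
        exact h0.symm.trans hKK.1
      have key : ∀ i, i ≤ m + 1 →
          posOf X (j + i) = posOf X j + i ∧ (1 ≤ i → i ≤ m → X (j + i) = [α]) := by
        intro i
        induction i with
        | zero => intro _; exact ⟨by simp, by omega⟩
        | succ i ih =>
          intro hi
          obtain ⟨hpos, hseg⟩ := ih (by omega)
          have hlen1 : (X (j + i)).length = 1 := by
            rcases Nat.eq_zero_or_pos i with rfl | hp
            · rw [Nat.add_zero, hle]
            · rw [hseg (by omega) (by omega)]; rfl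
          have hposs : posOf X (j + (i + 1)) = posOf X j + (i + 1) := by
            rw [show j + (i + 1) = (j + i) + 1 from rfl, posOf_succ, hpos, hlen1]
            omega
          refine ⟨hposs, fun h1i h2i => ?_⟩
          have hzα : u (posOf X j + (i + 1)) = α := hKK.2.1 (i+1) (by omega) (by omega)
          have hzh := hheadnext (j + (i + 1))
          rw [hposs] at hzh
          have hhα : (Y (j + (i+1)))[0]'(by have := hYlen1 (j + (i+1)); omega) = α :=
            hzh.symm.trans hzα
          rcases img_head_alpha h1 h3 h4 (hdom (j + (i+1))) _ hhα with hα1 | ⟨hα2, hτα⟩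
          · exact hα1
          · exfalso
            have hY2 : Y (j + (i+1)) = tgWord τ γ 2 := by
              show g0 τ κ α γ (X (j + (i+1))) = _
              rw [hα2, g0_kak0 h1]
            have hz2 := hug (j + (i+1)) 1 (by rw [hY2]; simp)
            have hi2 : posOf X (j + (i+1)) + 1 = posOf X j + (i + 2) := by
              rw [hposs]
              omega
            rw [hi2] at hz2
            have hg2 : (Y (j + (i+1)))[1]'(by rw [hY2]; simp) = γ := by
              simp only [hY2]
              exact tg_get_succ 2 0 (by omega) (by simp)
            have hzi2 : u (posOf X j + (i + 2)) = γ := hz2.trans hg2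
            rcases Nat.lt_or_ge (i + 1) m with hlt | hge
            · exact h5 ((hKK.2.1 (i+2) (by omega) (by omega)).symm.trans hzi2)
            · have him : i + 1 = m := by omega
              have hzk : u (posOf X j + (i + 2)) = κ := by
                have := hKK.2.2.1
                show u (posOf X j + (i + 2)) = κ
                rw [show i + 2 = m + 1 by omega]
                exact this
              exact h4 (hzk.symm.trans hzi2)
      obtain ⟨hposm1, -⟩ := key (m + 1) (le_refl _)
      have hzκ : u (posOf X j + (m + 1)) = κ := hKK.2.2.1
      have hzh := hheadnext (j + (m + 1))
      rw [hposm1] at hzh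
      have hhκ : (Y (j + (m+1)))[0]'(by have := hYlen1 (j + (m+1)); omega) = κ :=
        hzh.symm.trans hzκ
      have hzγ : u (posOf X j + (m + 2)) = γ := hKK.2.2.2
      rcases img_head_kappa h1 h3 (hdom (j + (m+1))) _ hhκ with hk1 | ⟨k', hk', htgc⟩ | ⟨k', hkakc⟩
      · -- next segment is [κ]
        have hlenm1 : (X (j + (m+1))).length = 1 := by rw [hk1]; rfl
        have hposm2 : posOf X (j + (m + 2)) = posOf X j + (m + 2) := by
          rw [show j + (m + 2) = (j + (m+1)) + 1 from rfl, posOf_succ, hposm1, hlenm1]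
          omega
        have hzh2 := hheadnext (j + (m + 2))
        rw [hposm2] at hzh2
        have hhγ : (Y (j + (m+2)))[0]'(by have := hYlen1 (j + (m+2)); omega) = γ :=
          hzh2.symm.trans hzγ
        have hXm2 : X (j + (m+2)) = [γ] :=
          img_head_gamma h1 h2 h3 h4 (hdom (j + (m+2))) _ hhγ
        -- now the pattern κ α^m κ γ is a prefix of the tail of x
        have hKKx : KKp κ α γ (tl x (posOf X j)) m := by
          refine ⟨?_, ?_, ?_, ?_⟩
          · show x (posOf X j + 0) = κ
            rw [hxc]; exact hcκ
          · intro i hi1 hi2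
            obtain ⟨hpi, hsi⟩ := key i (by omega)
            have hα := prefOf_singleton.mp ((hsi hi1 hi2) ▸ hxl (j + i))
            rw [hpi] at hα
            show x (posOf X j + i) = α
            rw [← Nat.add_zero (posOf X j + i)]
            exact hα
          · have hκ2 := prefOf_singleton.mp (hk1 ▸ hxl (j + (m+1)))
            rw [hposm1] at hκ2
            show x (posOf X j + (m + 1)) = κ
            rw [← Nat.add_zero (posOf X j + (m+1))]
            exact hκ2
          · have hγ2 := prefOf_singleton.mp (hXm2 ▸ hxl (j + (m+2)))
            rw [hposm2] at hγ2
            show x (posOf X j + (m + 2)) = γ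
            rw [← Nat.add_zero (posOf X j + (m+2))]
            exact hγ2
        have hmax := (hgreedy j).2.2 (kakWord κ α γ m)
          (Or.inl (mem_CM.mpr (Or.inr ⟨m, rfl⟩))) (prefOf_kak.mpr hKKx)
        rw [hle] at hmax
        simp at hmax
      · -- next segment is τγ^{k'} : second letter of its image is not γ
        have hYm1 : Y (j + (m+1)) = g0 τ κ α γ (tgWord τ γ k') := by
          show g0 τ κ α γ (X (j + (m+1))) = _
          rw [htgc]
        have h2len : 1 < (Y (j + (m+1))).length := by
          rw [hYlen, htgc]
          simp
          omega
        have hz2 := hug (j + (m+1)) 1 h2len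
        rw [hposm1] at hz2
        have hsnd : (Y (j + (m+1)))[1]'h2len = γ := hz2.symm.trans hzγ
        simp only [hYm1] at hsnd
        exact img_snd_ne_gamma_tg h1 h4 h5 hk' (hYm1 ▸ h2len) hsnd
      · -- next segment is κα^{k'+1}κγ : second letter of its image is not γ
        have hYm1 : Y (j + (m+1)) = g0 τ κ α γ (kakWord κ α γ (k'+1)) := by
          show g0 τ κ α γ (X (j + (m+1))) = _
          rw [hkakc]
        have h2len : 1 < (Y (j + (m+1))).length := by
          rw [hYlen, hkakc]
          simp
        have hz2 := hug (j + (m+1)) 1 h2len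
        rw [hposm1] at hz2
        have hsnd : (Y (j + (m+1)))[1]'h2len = γ := hz2.symm.trans hzγ
        simp only [hYm1] at hsnd
        exact img_snd_ne_gamma_kak h1 h4 h5 (hYm1 ▸ h2len) hsnd
    rcases m'dom_cases hW with ⟨m, rfl⟩ | ⟨m, rfl⟩ | rfl | ⟨c', rfl⟩
    · exact absurd (prefOf_kak.mp hpre) (hkapcon m)
    · exact absurd (prefOf_kak.mp (prefOf_append_one.mp hpre).1) (hkapcon m)
    · -- W = τγγ : the pattern τγγ cannot appear
      exfalso
      have htgz := prefOf_tg.mp hpre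
      have hcτ : c = τ := by
        have h0 : tl u (posOf X j) 0 = c := by
          show u (posOf X j + 0) = c
          rw [Nat.add_zero]; exact hzc
        exact h0.symm.trans htgz.1
      have hstep1 : posOf X (j + 1) = posOf X j + 1 := by
        rw [posOf_succ, hle]
      have hz1 : u (posOf X j + 1) = γ := htgz.2 1 (by omega) (by omega)
      have hzh1 := hheadnext (j + 1)
      rw [hstep1] at hzh1
      have hX1 : X (j + 1) = [γ] := img_head_gamma h1 h2 h3 h4 (hdom (j+1)) _
        (hzh1.symm.trans hz1)
      have hstep2 : posOf X (j + 2) = posOf X j + 2 := by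
        rw [show j + 2 = (j+1) + 1 from rfl, posOf_succ, hstep1, hX1]
        simp
      have hz2 : u (posOf X j + 2) = γ := htgz.2 2 (by omega) (by omega)
      have hzh2 := hheadnext (j + 2)
      rw [hstep2] at hzh2
      have hX2 : X (j + 2) = [γ] := img_head_gamma h1 h2 h3 h4 (hdom (j+2)) _
        (hzh2.symm.trans hz2)
      have hTGx : TGp τ γ (tl x (posOf X j)) 2 := by
        refine ⟨by show x (posOf X j + 0) = τ; rw [hxc]; exact hcτ, fun i hi1 hi2 => ?_⟩
        interval_cases i
        · have hγ2 := prefOf_singleton.mp (hX1 ▸ hxl (j + 1))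
          rw [hstep1] at hγ2
          show x (posOf X j + 1) = γ
          rw [← Nat.add_zero (posOf X j + 1)]
          exact hγ2
        · have hγ2 := prefOf_singleton.mp (hX2 ▸ hxl (j + 2))
          rw [hstep2] at hγ2
          show x (posOf X j + 2) = γ
          rw [← Nat.add_zero (posOf X j + 2)]
          exact hγ2
      have hmax := (hgreedy j).2.2 (tgWord τ γ 2)
        (Or.inl (mem_CM.mpr (Or.inl ⟨2, le_refl 2, rfl⟩))) (prefOf_tg.mpr hTGx)
      rw [hle] at hmax
      simp only [tg_len] at hmax
      omega
    · rw [hYj]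
      simp


include h1 h2 h3 h4 h5 in
lemma transfer_backward {u x : ℕ → Fin N} {Y : ℕ → List (Fin N)}
    (hu : InOmega κ u) (hY : IsDecompOf (CM' τ κ α γ) u Y)
    (hx : ConcatEq (fun j => g0inv τ κ α γ (Y j)) x) :
    InOmega κ x ∧ IsDecompOf (CM τ κ α γ) x (fun j => g0inv τ κ α γ (Y j)) := by
  set W : ℕ → List (Fin N) := fun j => g0inv τ κ α γ (Y j) with hWdef
  have hdom : ∀ j, Y j ∈ CM' τ κ α γ ∨ (Y j).length = 1 := fun j => (hY j).2.1
  have hYlen : ∀ j, 1 ≤ (Y j).length := decomp_len_pos hY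
  have hWlen : ∀ j, (W j).length = (Y j).length := fun j => g0inv_len h1 h3 (hdom j)
  have hposW : ∀ j, posOf W j = posOf Y j := fun j =>
    Finset.sum_congr rfl fun t _ => hWlen t
  have hWlen1 : ∀ j, 1 ≤ (W j).length := fun j => by rw [hWlen]; exact hYlen j
  have hxg : ∀ j i, ∀ hi : i < (W j).length, x (posOf Y j + i) = (W j)[i] := by
    intro j i hi
    have h := concat_get hx (j := j) (i := i) hi
    rwa [hposW] at h
  have hgreedy : ∀ j, Greedy (CM' τ κ α γ) (tl u (posOf Y j)) (Y j) :=
    isDecompOf_iff.mp hY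
  have hul : ∀ j, PrefOf (Y j) (tl u (posOf Y j)) := fun j => (hgreedy j).1
  have hheadnext : ∀ j', x (posOf Y j') =
      (W j')[0]'(by have := hWlen1 j'; omega) := by
    intro j'
    have h := hxg j' 0 (by have := hWlen1 j'; omega)
    rwa [Nat.add_zero] at h
  obtain ⟨n₀, hn⟩ := hu
  have hΩx : InOmega κ x := by
    refine ⟨n₀, fun n hn' => ?_⟩
    have hc1 := JX_le W n
    have hc2 := JX_lt hWlen1 n
    set j := JX W n with hjdef
    rw [posOf_succ] at hc2
    rw [hposW] at hc1 hc2
    rw [hWlen] at hc2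
    rcases m'dom_cases (hdom j) with ⟨k, he⟩ | ⟨k, he⟩ | he | ⟨c, he⟩
    · have hkk := prefOf_kak.mp (he ▸ hul j)
      have hγu : u (posOf Y j + (k + 2)) = γ := hkk.2.2.2
      have hlt : posOf Y j + (k + 2) < n₀ := by
        by_contra hcon
        push_neg at hcon
        exact h4 ((hn _ hcon).symm.trans hγu)
      have hle : (Y j).length = k + 3 := by rw [he]; simp
      omega
    · obtain ⟨hw1, hw2⟩ := prefOf_append_one.mp (he ▸ hul j)
      rw [kak_len] at hw2
      have hlt : posOf Y j + (k + 3) < n₀ := by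
        by_contra hcon
        push_neg at hcon
        exact h4 ((hn _ hcon).symm.trans hw2)
      have hle : (Y j).length = k + 4 := by rw [he]; simp
      omega
    · have htg := prefOf_tg.mp (he ▸ hul j)
      have hγu : u (posOf Y j + 2) = γ := htg.2 2 (by omega) (by omega)
      have hlt : posOf Y j + 2 < n₀ := by
        by_contra hcon
        push_neg at hcon
        exact h4 ((hn _ hcon).symm.trans hγu)
      have hle : (Y j).length = 3 := by rw [he]; simp
      omega
    · have hle : (Y j).length = 1 := by rw [he]; rfl
      have hnp : n = posOf Y j := by omega
      have hWj : W j = [c] := by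
        show g0inv τ κ α γ (Y j) = [c]
        rw [he, g0inv_single h1]
      have h0 := hheadnext j
      rw [hnp, h0]
      have hcu : u (posOf Y j + 0) = c := prefOf_singleton.mp (he ▸ hul j)
      have hcκ : c = κ := by
        rw [← hcu, Nat.add_zero]
        exact hn _ (by omega)
      simp only [hWj, List.getElem_singleton]
      exact hcκ
  refine ⟨hΩx, ?_⟩
  rw [isDecompOf_iff]
  intro j
  rw [hposW j]
  have hpref : PrefOf (W j) (tl x (posOf Y j)) := by
    have h : PrefOf (W j) (tl x (posOf W j)) := hx j
    rwa [hposW j] at h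
  refine ⟨hpref, g0inv_mem h1 h3 (hdom j), ?_⟩
  intro W' hW' hpre
  rcases m'dom_cases (hdom j) with ⟨k, he⟩ | ⟨k, he⟩ | he | ⟨c, he⟩
  · -- Y j = κα^kκγ ; W j = τγ^{k+2}
    have hWj : W j = tgWord τ γ (k + 2) := by
      show g0inv τ κ α γ (Y j) = _
      rw [he, g0inv_kak]
    have hKKu : KKp κ α γ (tl u (posOf Y j)) k := prefOf_kak.mp (he ▸ hul j)
    have hTGx : TGp τ γ (tl x (posOf Y j)) (k + 2) := prefOf_tg.mp (hWj ▸ hpref)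
    have hstep : posOf Y (j + 1) = posOf Y j + (k + 3) := by
      rw [posOf_succ, he]; simp
    have hnotγu : u (posOf Y j + (k + 3)) ≠ γ := by
      intro hγu
      have hpp : PrefOf (kakWord κ α γ k ++ [γ]) (tl u (posOf Y j)) :=
        prefOf_append_one.mpr ⟨prefOf_kak.mpr hKKu, by
          rw [kak_len]; exact hγu⟩
      have hmax := (hgreedy j).2.2 (kakWord κ α γ k ++ [γ])
        (Or.inl (mem_CM'.mpr (Or.inr (Or.inl ⟨k, rfl⟩)))) hpp
      rw [he] at hmax
      simp at hmax
    rcases mdom_cases hW' with ⟨m, hm, rfl⟩ | ⟨m, rfl⟩ | rfl | ⟨c', rfl⟩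
    · have hTG' := prefOf_tg.mp hpre
      have hmle : m ≤ k + 2 := by
        by_contra hcon
        push_neg at hcon
        have hxγ : x (posOf Y j + (k + 3)) = γ := hTG'.2 (k+3) (by omega) (by omega)
        have hhd := hheadnext (j + 1)
        rw [hstep] at hhd
        have hγhd : (W (j+1))[0]'(by have := hWlen1 (j+1); omega) = γ :=
          hhd.symm.trans hxγ
        have hY1 : Y (j + 1) = [γ] :=
          pre_head_gamma h2 h4 (hdom (j+1)) _ hγhd h1 h3
        have huγ : u (posOf Y (j+1) + 0) = γ := prefOf_singleton.mp (hY1 ▸ hul (j+1))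
        rw [hstep, Nat.add_zero] at huγ
        exact hnotγu huγ
      rw [hWj]
      simp
      omega
    · exact absurd ((prefOf_kak.mp hpre).1.symm.trans hTGx.1) (Ne.symm h1)
    · exact absurd ((prefOf_kak.mp hpre).1.symm.trans hTGx.1) (Ne.symm h1)
    · rw [hWj]
      simp
  · -- Y j = κα^kκγγ ; W j = κα^{k+1}κγ
    have hWj : W j = kakWord κ α γ (k + 1) := by
      show g0inv τ κ α γ (Y j) = _
      rw [he, g0inv_kakg h3]
    have hKKx : KKp κ α γ (tl x (posOf Y j)) (k + 1) := prefOf_kak.mp (hWj ▸ hpref)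
    rcases mdom_cases hW' with ⟨m, hm, rfl⟩ | ⟨m, rfl⟩ | rfl | ⟨c', rfl⟩
    · exact absurd ((prefOf_tg.mp hpre).1.symm.trans hKKx.1) h1
    · have hm := kk_unique h3 (prefOf_kak.mp hpre) hKKx
      rw [hWj]
      simp
      omega
    · have hm := kk_unique h3 (prefOf_kak.mp hpre) hKKx
      rw [hWj]
      simp
    · rw [hWj]
      simp
  · -- Y j = τγγ ; W j = κκγ
    have hWj : W j = kakWord κ α γ 0 := by
      show g0inv τ κ α γ (Y j) = _
      rw [he, g0inv_tg2 h1]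
    have hKKx : KKp κ α γ (tl x (posOf Y j)) 0 := prefOf_kak.mp (hWj ▸ hpref)
    rcases mdom_cases hW' with ⟨m, hm, rfl⟩ | ⟨m, rfl⟩ | rfl | ⟨c', rfl⟩
    · exact absurd ((prefOf_tg.mp hpre).1.symm.trans hKKx.1) h1
    · have hm := kk_unique h3 (prefOf_kak.mp hpre) hKKx
      rw [hWj]
      simp
      omega
    · rw [hWj]
    · rw [hWj]
      simp
  · -- Y j = [c] ; W j = [c]
    have hWj : W j = [c] := by
      show g0inv τ κ α γ (Y j) = [c]
      rw [he, g0inv_single h1]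
    have hle : (Y j).length = 1 := by rw [he]; rfl
    have hzc : x (posOf Y j) = c := by
      have h0 := hheadnext j
      rw [h0]
      simp [hWj]
    have hcu : u (posOf Y j + 0) = c := prefOf_singleton.mp (he ▸ hul j)
    have hkapcon : ∀ m, KKp κ α γ (tl x (posOf Y j)) m → False := by
      intro m hKK
      have hcκ : c = κ := by
        have h0 : tl x (posOf Y j) 0 = c := by
          show x (posOf Y j + 0) = c
          rw [Nat.add_zero]; exact hzc
        exact h0.symm.trans hKK.1
      have key : ∀ i, i ≤ m + 1 →
          posOf Y (j + i) = posOf Y j + i ∧ (1 ≤ i → i ≤ m → Y (j + i) = [α]) := by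
        intro i
        induction i with
        | zero => intro _; exact ⟨by simp, by omega⟩
        | succ i ih =>
          intro hi
          obtain ⟨hpos, hseg⟩ := ih (by omega)
          have hlen1 : (Y (j + i)).length = 1 := by
            rcases Nat.eq_zero_or_pos i with rfl | hp
            · rw [Nat.add_zero, hle]
            · rw [hseg (by omega) (by omega)]; rfl
          have hposs : posOf Y (j + (i + 1)) = posOf Y j + (i + 1) := by
            rw [show j + (i + 1) = (j + i) + 1 from rfl, posOf_succ, hpos, hlen1]
            omega
          refine ⟨hposs, fun h1i h2i => ?_⟩
          have hzα : x (posOf Y j + (i + 1)) = α := hKK.2.1 (i+1) (by omega) (by omega)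
          have hzh := hheadnext (j + (i + 1))
          rw [hposs] at hzh
          have hhα : (W (j + (i+1)))[0]'(by have := hWlen1 (j + (i+1)); omega) = α :=
            hzh.symm.trans hzα
          rcases pre_head_alpha h3 h4 (hdom (j + (i+1))) _ hhα h1 with hα1 | ⟨⟨k'', hα2⟩, hτα⟩
          · exact hα1
          · exfalso
            have hW2 : W (j + (i+1)) = tgWord τ γ (k'' + 2) := by
              show g0inv τ κ α γ (Y (j + (i+1))) = _
              rw [hα2, g0inv_kak]
            have hz2 := hxg (j + (i+1)) 1 (by rw [hW2]; simp)
            have hi2 : posOf Y (j + (i+1)) + 1 = posOf Y j + (i + 2) := by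
              rw [hposs]
              omega
            rw [hi2] at hz2
            have hg2 : (W (j + (i+1)))[1]'(by rw [hW2]; simp) = γ := by
              simp only [hW2]
              exact tg_get_succ (k''+2) 0 (by omega) (by simp)
            have hzi2 : x (posOf Y j + (i + 2)) = γ := hz2.trans hg2
            rcases Nat.lt_or_ge (i + 1) m with hlt | hge
            · exact h5 ((hKK.2.1 (i+2) (by omega) (by omega)).symm.trans hzi2)
            · have hzk : x (posOf Y j + (i + 2)) = κ := by
                have := hKK.2.2.1
                show x (posOf Y j + (i + 2)) = κ
                rw [show i + 2 = m + 1 by omega]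
                exact this
              exact h4 (hzk.symm.trans hzi2)
      obtain ⟨hposm1, -⟩ := key (m + 1) (le_refl _)
      have hzκ : x (posOf Y j + (m + 1)) = κ := hKK.2.2.1
      have hzh := hheadnext (j + (m + 1))
      rw [hposm1] at hzh
      have hhκ : (W (j + (m+1)))[0]'(by have := hWlen1 (j + (m+1)); omega) = κ :=
        hzh.symm.trans hzκ
      have hzγ : x (posOf Y j + (m + 2)) = γ := hKK.2.2.2
      rcases pre_head_kappa h1 h3 (hdom (j + (m+1))) _ hhκ with hk1 | ⟨k', hkakgc⟩ | htg2c
      · -- next segment of u is [κ]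
        have hlenm1 : (Y (j + (m+1))).length = 1 := by rw [hk1]; rfl
        have hposm2 : posOf Y (j + (m + 2)) = posOf Y j + (m + 2) := by
          rw [show j + (m + 2) = (j + (m+1)) + 1 from rfl, posOf_succ, hposm1, hlenm1]
          omega
        have hzh2 := hheadnext (j + (m + 2))
        rw [hposm2] at hzh2
        have hhγ : (W (j + (m+2)))[0]'(by have := hWlen1 (j + (m+2)); omega) = γ :=
          hzh2.symm.trans hzγ
        have hYm2 : Y (j + (m+2)) = [γ] :=
          pre_head_gamma h2 h4 (hdom (j + (m+2))) _ hhγ h1 h3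
        have hKKu : KKp κ α γ (tl u (posOf Y j)) m := by
          refine ⟨?_, ?_, ?_, ?_⟩
          · show u (posOf Y j + 0) = κ
            rw [hcu]; exact hcκ
          · intro i hi1 hi2
            obtain ⟨hpi, hsi⟩ := key i (by omega)
            have hα := prefOf_singleton.mp ((hsi hi1 hi2) ▸ hul (j + i))
            rw [hpi] at hα
            show u (posOf Y j + i) = α
            rw [← Nat.add_zero (posOf Y j + i)]
            exact hα
          · have hκ2 := prefOf_singleton.mp (hk1 ▸ hul (j + (m+1)))
            rw [hposm1] at hκ2
            show u (posOf Y j + (m + 1)) = κ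
            rw [← Nat.add_zero (posOf Y j + (m+1))]
            exact hκ2
          · have hγ2 := prefOf_singleton.mp (hYm2 ▸ hul (j + (m+2)))
            rw [hposm2] at hγ2
            show u (posOf Y j + (m + 2)) = γ
            rw [← Nat.add_zero (posOf Y j + (m+2))]
            exact hγ2
        have hmax := (hgreedy j).2.2 (kakWord κ α γ m)
          (Or.inl (mem_CM'.mpr (Or.inl ⟨m, rfl⟩))) (prefOf_kak.mpr hKKu)
        rw [hle] at hmax
        simp at hmax
      · -- next segment of u is κα^{k'}κγγ
        have hWm1 : W (j + (m+1)) = g0inv τ κ α γ (kakWord κ α γ k' ++ [γ]) := by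
          show g0inv τ κ α γ (Y (j + (m+1))) = _
          rw [hkakgc]
        have h2len : 1 < (W (j + (m+1))).length := by
          rw [hWlen, hkakgc]
          simp
        have hz2 := hxg (j + (m+1)) 1 h2len
        rw [hposm1] at hz2
        have hsnd : (W (j + (m+1)))[1]'h2len = γ := hz2.symm.trans hzγ
        simp only [hWm1] at hsnd
        exact pre_snd_ne_gamma_kakg h1 h3 h4 h5 (hWm1 ▸ h2len) hsnd
      · -- next segment of u is τγγ
        have hWm1 : W (j + (m+1)) = g0inv τ κ α γ (tgWord τ γ 2) := by
          show g0inv τ κ α γ (Y (j + (m+1))) = _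
          rw [htg2c]
        have h2len : 1 < (W (j + (m+1))).length := by
          rw [hWlen, htg2c]
          simp
        have hz2 := hxg (j + (m+1)) 1 h2len
        rw [hposm1] at hz2
        have hsnd : (W (j + (m+1)))[1]'h2len = γ := hz2.symm.trans hzγ
        simp only [hWm1] at hsnd
        exact pre_snd_ne_gamma_tg2 h1 h3 h4 (hWm1 ▸ h2len) hsnd
    rcases mdom_cases hW' with ⟨m, hm, rfl⟩ | ⟨m, rfl⟩ | rfl | ⟨c', rfl⟩
    · -- W' = τγ^m : the pattern τγγ cannot appear in x here
      exfalso
      have hTG' := prefOf_tg.mp hpre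
      have hcτ : c = τ := by
        have h0 : tl x (posOf Y j) 0 = c := by
          show x (posOf Y j + 0) = c
          rw [Nat.add_zero]; exact hzc
        exact h0.symm.trans hTG'.1
      have hstep1 : posOf Y (j + 1) = posOf Y j + 1 := by
        rw [posOf_succ, hle]
      have hz1 : x (posOf Y j + 1) = γ := hTG'.2 1 (by omega) (by omega)
      have hzh1 := hheadnext (j + 1)
      rw [hstep1] at hzh1
      have hY1 : Y (j + 1) = [γ] := pre_head_gamma h2 h4 (hdom (j+1)) _
        (hzh1.symm.trans hz1) h1 h3
      have hstep2 : posOf Y (j + 2) = posOf Y j + 2 := by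
        rw [show j + 2 = (j+1) + 1 from rfl, posOf_succ, hstep1, hY1]
        simp
      have hz2 : x (posOf Y j + 2) = γ := hTG'.2 2 (by omega) (by omega)
      have hzh2 := hheadnext (j + 2)
      rw [hstep2] at hzh2
      have hY2 : Y (j + 2) = [γ] := pre_head_gamma h2 h4 (hdom (j+2)) _
        (hzh2.symm.trans hz2) h1 h3
      have hTGu : TGp τ γ (tl u (posOf Y j)) 2 := by
        refine ⟨by show u (posOf Y j + 0) = τ; rw [hcu]; exact hcτ, fun i hi1 hi2 => ?_⟩
        interval_cases i
        · have hγ2 := prefOf_singleton.mp (hY1 ▸ hul (j + 1))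
          rw [hstep1] at hγ2
          show u (posOf Y j + 1) = γ
          rw [← Nat.add_zero (posOf Y j + 1)]
          exact hγ2
        · have hγ2 := prefOf_singleton.mp (hY2 ▸ hul (j + 2))
          rw [hstep2] at hγ2
          show u (posOf Y j + 2) = γ
          rw [← Nat.add_zero (posOf Y j + 2)]
          exact hγ2
      have hmax := (hgreedy j).2.2 (tgWord τ γ 2)
        (Or.inl (mem_CM'.mpr (Or.inr (Or.inr rfl)))) (prefOf_tg.mpr hTGu)
      rw [hle] at hmax
      simp only [tg_len] at hmax
      omega
    · exact absurd (prefOf_kak.mp hpre) (hkapcon (m+1))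
    · exact absurd (prefOf_kak.mp hpre) (hkapcon 0)
    · rw [hWj]
      simp

end transfer2
end S15


open S15 in
/-- if `(X j)` is the M-decomposition of `x ∈ Ω`, then
`(g₀ (X j))` is the M'-decomposition of `g(x) = ∏ g₀(X j)`; consequently the
induced map `g` is a bijection of `Ω` onto itself. -/
theorem stmt15 {N : ℕ} (hN : 4 ≤ N) (τ κ α γ : Fin N)
    (h1 : τ ≠ κ) (h2 : τ ≠ γ) (h3 : κ ≠ α) (h4 : κ ≠ γ) (h5 : α ≠ γ) :
    -- the image decomposition is the M'-decomposition
    (∀ x : ℕ → Fin N, ∀ X : ℕ → List (Fin N), ∀ u : ℕ → Fin N,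
      InOmega κ x → IsDecompOf (CM τ κ α γ) x X →
      ConcatEq (fun j => g0 τ κ α γ (X j)) u →
      InOmega κ u ∧ IsDecompOf (CM' τ κ α γ) u (fun j => g0 τ κ α γ (X j))) ∧
    -- g is well defined on Ω
    (∀ x : ℕ → Fin N, InOmega κ x →
      ∃! u : ℕ → Fin N, ∃ X : ℕ → List (Fin N),
        IsDecompOf (CM τ κ α γ) x X ∧ ConcatEq (fun j => g0 τ κ α γ (X j)) u) ∧
    -- g is a bijection of Ω onto Ω
    (∀ u : ℕ → Fin N, InOmega κ u →
      ∃! x : ℕ → Fin N, InOmega κ x ∧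
        ∃ X : ℕ → List (Fin N),
          IsDecompOf (CM τ κ α γ) x X ∧
          ConcatEq (fun j => g0 τ κ α γ (X j)) u) := by
  refine ⟨?_, ?_, ?_⟩
  · intro x X u hx hX hu
    exact transfer_forward h1 h2 h3 h4 h5 hx hX hu
  · intro x hx
    have hg : ∀ n, ∃ w, Greedy (CM τ κ α γ) (tl x n) w := fun n =>
      greedyM_exists h1 h3 h4 (inOmega_tl hx n)
    have hXd := decomp_exists hg
    set X := decF (CM τ κ α γ) x with hXdef
    have hlen' : ∀ j, 1 ≤ (g0 τ κ α γ (X j)).length := fun j => by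
      rw [g0_len h1 h3 (hXd j).2.1]
      exact decomp_len_pos hXd j
    refine ⟨concatF (fun j => g0 τ κ α γ (X j)) hlen',
      ⟨X, hXd, concatF_spec _ hlen'⟩, ?_⟩
    rintro u' ⟨X', hX'd, hu'⟩
    have hXX := decomp_unique hX'd hXd
    rw [hXX] at hu'
    exact concat_unique hlen' hu' (concatF_spec _ hlen')
  · intro u hu
    have hg : ∀ n, ∃ w, Greedy (CM' τ κ α γ) (tl u n) w := fun n =>
      greedyM'_exists h1 h3 (inOmega_tl hu n)
    have hYd := decomp_exists hg
    set Y := decF (CM' τ κ α γ) u with hYdef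
    have hWlen1 : ∀ j, 1 ≤ (g0inv τ κ α γ (Y j)).length := fun j => by
      rw [g0inv_len h1 h3 (hYd j).2.1]
      exact decomp_len_pos hYd j
    have hxc := concatF_spec (fun j => g0inv τ κ α γ (Y j)) hWlen1
    obtain ⟨hΩx, hWd⟩ := transfer_backward h1 h2 h3 h4 h5 hu hYd hxc
    have hgY : (fun j => g0 τ κ α γ (g0inv τ κ α γ (Y j))) = Y :=
      funext fun j => g0_g0inv h1 h3 (hYd j).2.1
    refine ⟨concatF (fun j => g0inv τ κ α γ (Y j)) hWlen1,
      ⟨hΩx, fun j => g0inv τ κ α γ (Y j), hWd, ?_⟩, ?_⟩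
    · show ConcatEq (fun j => g0 τ κ α γ (g0inv τ κ α γ (Y j))) u
      rw [hgY]
      exact fun j => (hYd j).1
    · rintro x' ⟨hΩx', X', hX'd, hu'⟩
      obtain ⟨-, hYd'⟩ := transfer_forward h1 h2 h3 h4 h5 hΩx' hX'd hu'
      have hYY : (fun j => g0 τ κ α γ (X' j)) = Y := decomp_unique hYd' hYd
      have hXW : X' = fun j => g0inv τ κ α γ (Y j) := by
        funext j
        have hc : g0 τ κ α γ (X' j) = Y j := congrFun hYY j
        rw [← hc, g0inv_g0 h1 h3 (hX'd j).2.1]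
      have hcx' : ConcatEq X' x' := fun j => (hX'd j).1
      rw [hXW] at hcx'
      exact concat_unique hWlen1 hcx' hxc
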